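/- Let κ > 0, define T_κ : ℝ² → ℝ² by T_κ y = |y|^{κ−1} y for y ≠ 0 and T_κ 0 = 0, let ψ : ℝ² → ℝ be radial and differentiable at a point y ≠ 0, and set φ = ψ ∘ T_κ^{-1} and x = T_κ y. Then κ² |∇φ(x)|² = |∇ψ(y)|² |y|^{2 − 2κ}. -/

import Mathlib

open RealInnerProductSpace

noncomputable abbrev E2 : Type := EuclideanSpace ℝ (Fin 2)

/-- The transformation T_κ y = |y|^{κ-1} y (with T_κ 0 = 0). -/
noncomputable def Tk (κ : ℝ) (y : E2) : E2 := ‖y‖ ^ (κ - 1) • y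

lemma hasFDerivAt_norm' (x : E2) (hx : x ≠ 0) :
    HasFDerivAt (fun z : E2 => ‖z‖) (‖x‖⁻¹ • innerSL ℝ x) x := by
  have hxn : (0:ℝ) < ‖x‖ := norm_pos_iff.mpr hx
  have h1 : HasFDerivAt (fun z : E2 => ‖z‖ ^ (2:ℝ))
      ((2 * ‖x‖ ^ ((2:ℝ) - 2)) • innerSL ℝ x) x := hasFDerivAt_norm_rpow x one_lt_two
  have h2 : (‖x‖ ^ (2:ℝ)) ≠ 0 := by positivity
  have h3 := (Real.hasDerivAt_sqrt h2).comp_hasFDerivAt x h1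
  have h4 : (fun z : E2 => Real.sqrt (‖z‖ ^ (2:ℝ))) = fun z : E2 => ‖z‖ := by
    funext z
    rw [show ((2:ℝ)) = ((2:ℕ):ℝ) by norm_num, Real.rpow_natCast,
      Real.sqrt_sq (norm_nonneg z)]
  simp only [Function.comp_def] at h3; rw [h4] at h3
  refine h3.congr_fderiv ?_
  have h5 : Real.sqrt (‖x‖ ^ (2:ℝ)) = ‖x‖ := by
    rw [show ((2:ℝ)) = ((2:ℕ):ℝ) by norm_num, Real.rpow_natCast,
      Real.sqrt_sq (norm_nonneg x)]
  rw [h5, smul_smul]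
  congr 1
  rw [sub_self, Real.rpow_zero]
  field_simp

lemma hasFDerivAt_Tk (μ : ℝ) (x : E2) (hx : x ≠ 0) :
    HasFDerivAt (Tk μ)
      ((‖x‖ ^ (μ - 1)) • ContinuousLinearMap.id ℝ E2
        + (((μ - 1) * ‖x‖ ^ (μ - 2)) • (‖x‖⁻¹ • innerSL ℝ x)).smulRight x) x := by
  have hxn : (0:ℝ) < ‖x‖ := norm_pos_iff.mpr hx
  have hc : HasDerivAt (fun r : ℝ => r ^ (μ - 1)) ((μ - 1) * ‖x‖ ^ (μ - 1 - 1)) ‖x‖ :=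
    Real.hasDerivAt_rpow_const (Or.inl hxn.ne')
  have hn := hasFDerivAt_norm' x hx
  have hcomp := hc.comp_hasFDerivAt x hn
  have h := hcomp.smul (hasFDerivAt_id x)
  have he : μ - 1 - 1 = μ - 2 := by ring
  simp only [id_eq, Function.comp_def, he] at h
  exact h

lemma radial_fderiv_orth (ψ : E2 → ℝ) (hψ_rad : ∀ y y' : E2, ‖y‖ = ‖y'‖ → ψ y = ψ y')
    (y : E2) (hy : y ≠ 0) (hψ : DifferentiableAt ℝ ψ y)
    (v : E2) (hv : ⟪y, v⟫ = 0) : fderiv ℝ ψ y v = 0 := by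
  have hyn : (0:ℝ) < ‖y‖ := norm_pos_iff.mpr hy
  set u : ℝ → E2 := fun t => y + t • v with hu_def
  have hu0 : u 0 = y := by simp [hu_def]
  have hu : HasDerivAt u v 0 := by
    have h := ((hasDerivAt_id (0:ℝ)).smul_const v).const_add y
    simpa [hu_def] using h
  have hn : HasDerivAt (fun t => ‖u t‖) 0 0 := by
    have h0 := hasFDerivAt_norm' y hy
    rw [show y = u 0 from hu0.symm] at h0
    have h1 := h0.comp_hasDerivAt 0 hu
    have hz : (‖u 0‖⁻¹ • innerSL ℝ (u 0)) v = 0 := by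
      rw [hu0]
      show ‖y‖⁻¹ • (inner ℝ y v : ℝ) = 0
      rw [hv, smul_zero]
    rw [hz] at h1
    simpa [Function.comp_def] using h1
  have hun0 : ‖u 0‖ ≠ 0 := by rw [hu0]; exact hyn.ne'
  have hs : HasDerivAt (fun t => ‖y‖ * (‖u t‖)⁻¹) 0 0 := by
    have h1 := (hn.inv hun0).const_mul ‖y‖
    simpa using h1
  have hc : HasDerivAt (fun t => (‖y‖ * (‖u t‖)⁻¹) • u t) v 0 := by
    have h1 := hs.smul hu
    have h2 : ‖y‖ * ‖u 0‖⁻¹ = 1 := by rw [hu0]; field_simp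
    exact h1.congr_deriv (by rw [h2]; simp)
  have hc0 : (‖y‖ * (‖u 0‖)⁻¹) • u 0 = y := by
    rw [hu0, mul_inv_cancel₀ hyn.ne', one_smul]
  have hψfd := hψ.hasFDerivAt
  rw [← hc0] at hψfd
  have h2 := hψfd.comp_hasDerivAt 0 hc
  have hev : (fun t => ψ ((‖y‖ * (‖u t‖)⁻¹) • u t)) =ᶠ[nhds (0:ℝ)] fun _ => ψ y := by
    have hcont : Continuous u := by fun_prop
    have hne : ∀ᶠ t in nhds (0:ℝ), u t ≠ 0 :=
      hcont.continuousAt.eventually_ne (hu0 ▸ hy)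
    filter_upwards [hne] with t ht
    apply hψ_rad
    have hut : ‖u t‖ ≠ 0 := norm_ne_zero_iff.mpr ht
    rw [norm_smul, Real.norm_eq_abs, abs_of_nonneg (by positivity)]
    field_simp
  have h3 : HasDerivAt (fun t => ψ ((‖y‖ * (‖u t‖)⁻¹) • u t)) 0 0 :=
    (hasDerivAt_const (0:ℝ) (ψ y)).congr_of_eventuallyEq hev
  have h4 := h2.unique h3
  rw [hc0] at h4
  simpa using h4

lemma radial_gradient (ψ : E2 → ℝ) (hψ_rad : ∀ y y' : E2, ‖y‖ = ‖y'‖ → ψ y = ψ y')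
    (y : E2) (hy : y ≠ 0) (hψ : DifferentiableAt ℝ ψ y) :
    gradient ψ y = ((⟪gradient ψ y, y⟫) / ‖y‖ ^ 2) • y := by
  have hyn : (0:ℝ) < ‖y‖ := norm_pos_iff.mpr hy
  set g := gradient ψ y with hg
  set c₀ : ℝ := ⟪g, y⟫ / ‖y‖ ^ 2 with hc₀
  set w : E2 := g - c₀ • y with hw_def
  have hfd : fderiv ℝ ψ y = InnerProductSpace.toDual ℝ E2 g :=
    (hasGradientAt_iff_hasFDerivAt.mp hψ.hasGradientAt).fderiv
  have hw : ⟪y, w⟫ = 0 := by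
    rw [hw_def, inner_sub_right, real_inner_smul_right, real_inner_comm g y,
      real_inner_self_eq_norm_sq, hc₀]
    field_simp
    ring
  have horth := radial_fderiv_orth ψ hψ_rad y hy hψ w hw
  rw [hfd, InnerProductSpace.toDual_apply_apply] at horth
  have hww : ⟪w, w⟫ = 0 := by
    rw [hw_def, inner_sub_left, real_inner_smul_left]
    rw [hw_def] at horth hw
    rw [horth, hw]
    ring
  have : w = 0 := inner_self_eq_zero.mp hww
  rw [hw_def, sub_eq_zero] at this
  exact this

theorem Tk_gradient_identity_radial (κ : ℝ) (hκ : 0 < κ)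
    (ψ : E2 → ℝ) (hψ_rad : ∀ y y' : E2, ‖y‖ = ‖y'‖ → ψ y = ψ y')
    (φ : E2 → ℝ) (hφ : φ = ψ ∘ Tk (1 / κ))
    (y : E2) (hy : y ≠ 0) (hψ : DifferentiableAt ℝ ψ y)
    (x : E2) (hx : x = Tk κ y) :
    κ ^ 2 * ‖gradient φ x‖ ^ 2 = ‖gradient ψ y‖ ^ 2 * ‖y‖ ^ (2 - 2 * κ) := by
  have hyn : (0:ℝ) < ‖y‖ := norm_pos_iff.mpr hy
  set μ : ℝ := 1 / κ with hμ
  have hκμ : κ * μ = 1 := by rw [hμ]; field_simp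
  have hxy : x = (‖y‖ ^ (κ - 1)) • y := hx
  have hnx : ‖x‖ = ‖y‖ ^ κ := by
    rw [hxy, norm_smul, Real.norm_eq_abs,
      abs_of_nonneg (Real.rpow_nonneg hyn.le _), ← Real.rpow_add_one hyn.ne']
    norm_num
  have hxpos : (0:ℝ) < ‖x‖ := by rw [hnx]; positivity
  have hx0 : x ≠ 0 := norm_pos_iff.mp hxpos
  have hyx2 : y = (‖x‖ ^ (μ - 1)) • x := by
    rw [hnx, hxy, smul_smul, ← Real.rpow_mul hyn.le, ← Real.rpow_add hyn,
      show κ * (μ - 1) + (κ - 1) = 0 from by rw [mul_sub, mul_one, hκμ]; ring,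
      Real.rpow_zero, one_smul]
  have hyx : Tk μ x = y := by
    show (‖x‖ ^ (μ - 1)) • x = y
    exact hyx2.symm
  -- gradient of ψ
  set g := gradient ψ y with hg
  set c₀ : ℝ := ⟪g, y⟫ / ‖y‖ ^ 2 with hc₀def
  have hgrad : g = c₀ • y := radial_gradient ψ hψ_rad y hy hψ
  have hψfd : HasFDerivAt ψ (InnerProductSpace.toDual ℝ E2 g) y :=
    hasGradientAt_iff_hasFDerivAt.mp hψ.hasGradientAt
  rw [← hyx] at hψfd
  have hD := hasFDerivAt_Tk μ x hx0
  have hcomp := hψfd.comp x hD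
  set G : E2 := (c₀ * μ * ‖x‖ ^ (2*μ - 2)) • x with hG
  have hP : ∀ a b : ℝ, ‖x‖ ^ a * ‖x‖ ^ b = ‖x‖ ^ (a+b) :=
    fun a b => (Real.rpow_add hxpos a b).symm
  have hkey : (InnerProductSpace.toDual ℝ E2 g).comp
      ((‖x‖ ^ (μ - 1)) • ContinuousLinearMap.id ℝ E2
        + (((μ - 1) * ‖x‖ ^ (μ - 2)) • (‖x‖⁻¹ • innerSL ℝ x)).smulRight x)
      = InnerProductSpace.toDual ℝ E2 G := by
    apply ContinuousLinearMap.ext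
    intro v
    simp only [ContinuousLinearMap.comp_apply, ContinuousLinearMap.add_apply,
      ContinuousLinearMap.smul_apply, ContinuousLinearMap.id_apply,
      ContinuousLinearMap.smulRight_apply, innerSL_apply_apply,
      InnerProductSpace.toDual_apply_apply, hG]
    rw [hgrad, hyx2]
    simp only [inner_add_right, real_inner_smul_left, real_inner_smul_right,
      real_inner_self_eq_norm_sq, smul_eq_mul]
    have hinv : ‖x‖⁻¹ = ‖x‖ ^ (-1:ℝ) := (Real.rpow_neg_one _).symm
    have h2r : (‖x‖:ℝ) ^ (2:ℕ) = ‖x‖ ^ ((2:ℕ):ℝ) := (Real.rpow_natCast _ 2).symm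
    have e2 : ‖x‖ ^ (μ-1) * ‖x‖ ^ (μ-1) = ‖x‖ ^ (2*μ-2) := by
      rw [hP]; congr 1; ring
    have e3 : ‖x‖ ^ (μ-2) * (‖x‖ ^ (-1:ℝ) * (‖x‖ ^ (μ-1) * ‖x‖ ^ ((2:ℕ):ℝ))) =
        ‖x‖ ^ (2*μ-2) := by
      rw [hP, hP, hP]; congr 1; push_cast; ring
    rw [hinv, h2r]
    linear_combination (c₀ * (inner ℝ x v : ℝ)) * e2
      + (c₀ * (μ-1) * (inner ℝ x v : ℝ)) * e3
  have hGrad : HasGradientAt φ G x := by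
    rw [hasGradientAt_iff_hasFDerivAt, ← hkey, hφ]
    exact hcomp
  have hgφ : gradient φ x = G := hGrad.gradient
  have hκμ2 : κ^2 * μ^2 = 1 := by rw [← mul_pow, hκμ, one_pow]
  have hs4 : (‖x‖ ^ (2*μ-2))^2 * ‖x‖^2 = ‖y‖^2 * ‖y‖ ^ (2-2*κ) := by
    rw [sq (‖x‖ ^ (2*μ-2)), hP, ← Real.rpow_natCast ‖x‖ 2, hP, hnx,
      ← Real.rpow_mul hyn.le,
      show κ * (2*μ-2 + (2*μ-2) + ((2:ℕ):ℝ)) = (((2:ℕ):ℝ)) + (2-2*κ) from by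
        push_cast; linear_combination (4:ℝ) * hκμ,
      Real.rpow_add hyn, Real.rpow_natCast]
  rw [hgφ, hgrad, hG, norm_smul, norm_smul, Real.norm_eq_abs, Real.norm_eq_abs,
    mul_pow, mul_pow, sq_abs, sq_abs]
  linear_combination (κ^2*μ^2*c₀^2) * hs4
    + (c₀^2 * ‖y‖^2 * ‖y‖ ^ (2-2*κ)) * hκμ2
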